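/- If the logits have equal means, i.e. Σ_j z^s_j = Σ_j z^t_j, then the high-temperature limit of the KD gradient equals the logits-matching gradient: lim_{T→∞} T·(p^s_i(T) − p^t_i(T)) = (z^s_i − z^t_i)/K. -/

import Mathlib

open Filter

noncomputable def softmax (K : ℕ) (T : ℝ) (z : Fin K → ℝ) (i : Fin K) : ℝ :=
  Real.exp (z i / T) / ∑ j, Real.exp (z j / T)

lemma key_lim (a b : ℝ) :
    Tendsto (fun T : ℝ => T * (Real.exp (a / T) - Real.exp (b / T))) atTop
      (nhds (a - b)) := by
  have hf : HasDerivAt (fun x : ℝ => Real.exp (a * x) - Real.exp (b * x)) (a - b) 0 := by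
    have h1 : HasDerivAt (fun x : ℝ => Real.exp (a * x)) a 0 := by
      simpa [Function.comp_def] using (Real.hasDerivAt_exp (a * 0)).comp 0 ((hasDerivAt_id (0:ℝ)).const_mul a)
    have h2 : HasDerivAt (fun x : ℝ => Real.exp (b * x)) b 0 := by
      simpa [Function.comp_def] using (Real.hasDerivAt_exp (b * 0)).comp 0 ((hasDerivAt_id (0:ℝ)).const_mul b)
    exact h1.sub h2
  have hslope := hasDerivAt_iff_tendsto_slope.mp hf
  have hinv : Tendsto (fun T : ℝ => T⁻¹) atTop (nhdsWithin (0:ℝ) {x | x ≠ 0}) := by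
    refine tendsto_nhdsWithin_of_tendsto_nhds_of_eventually_within _ tendsto_inv_atTop_zero ?_
    filter_upwards [eventually_ge_atTop (1:ℝ)] with T hT
    have : T ≠ 0 := by linarith
    simp [this]
  have hcomp := hslope.comp hinv
  refine hcomp.congr' ?_
  filter_upwards [eventually_ge_atTop (1:ℝ)] with T hT
  have hT0 : T ≠ 0 := by linarith
  simp only [Function.comp, slope_def_field, mul_zero, Real.exp_zero, sub_self, sub_zero,
    div_eq_mul_inv, inv_zero, inv_inv]
  ring

/-- With equal-mean logits, the high-temperature limit of the KD gradient is the
    logits-matching gradient `(zˢ_i − zᵗ_i)/K`. -/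
theorem kd_grad_limit_equal_mean (K : ℕ) (hK : 1 ≤ K) (zt zs : Fin K → ℝ)
    (hmean : ∑ j, zs j = ∑ j, zt j) (i : Fin K) :
    Tendsto (fun T : ℝ => T * (softmax K T zs i - softmax K T zt i)) atTop
      (nhds ((zs i - zt i) / (K : ℝ))) := by
  have hKpos : (0:ℝ) < K := by exact_mod_cast hK
  set N : ℝ → ℝ := fun T =>
    T * ∑ j, (Real.exp ((zs i + zt j) / T) - Real.exp ((zt i + zs j) / T)) with hN
  set D : ℝ → ℝ := fun T => (∑ j, Real.exp (zs j / T)) * (∑ j, Real.exp (zt j / T)) with hD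
  have hDpos : ∀ T, 0 < D T := by
    intro T
    have : Nonempty (Fin K) := Fin.pos_iff_nonempty.mp hK
    have h1 : (0:ℝ) < ∑ j, Real.exp (zs j / T) :=
      Finset.sum_pos (fun j _ => Real.exp_pos _) Finset.univ_nonempty
    have h2 : (0:ℝ) < ∑ j, Real.exp (zt j / T) :=
      Finset.sum_pos (fun j _ => Real.exp_pos _) Finset.univ_nonempty
    exact mul_pos h1 h2
  have heq : ∀ T : ℝ, T * (softmax K T zs i - softmax K T zt i) = N T / D T := by
    intro T
    have : Nonempty (Fin K) := Fin.pos_iff_nonempty.mp hK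
    have h1 : (∑ j, Real.exp (zs j / T)) ≠ 0 :=
      (Finset.sum_pos (fun j _ => Real.exp_pos _) Finset.univ_nonempty).ne'
    have h2 : (∑ j, Real.exp (zt j / T)) ≠ 0 :=
      (Finset.sum_pos (fun j _ => Real.exp_pos _) Finset.univ_nonempty).ne'
    rw [softmax, softmax, hN, hD]
    rw [div_sub_div _ _ h1 h2]
    have hnum : Real.exp (zs i / T) * ∑ j, Real.exp (zt j / T) -
        (∑ j, Real.exp (zs j / T)) * Real.exp (zt i / T) =
        ∑ j, (Real.exp ((zs i + zt j) / T) - Real.exp ((zt i + zs j) / T)) := by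
      rw [Finset.mul_sum, Finset.sum_mul, ← Finset.sum_sub_distrib]
      refine Finset.sum_congr rfl fun j _ => ?_
      rw [← Real.exp_add, ← Real.exp_add, add_div, add_div, add_comm (zs j / T) (zt i / T)]
    rw [hnum]
    dsimp only
    ring
  have hNlim : Tendsto N atTop (nhds ((K : ℝ) * (zs i - zt i))) := by
    have : Tendsto (fun T : ℝ =>
        ∑ j, T * (Real.exp ((zs i + zt j) / T) - Real.exp ((zt i + zs j) / T))) atTop
        (nhds (∑ j : Fin K, ((zs i + zt j) - (zt i + zs j)))) :=
      tendsto_finset_sum _ (fun j _ => key_lim _ _)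
    have hsum : (∑ j : Fin K, ((zs i + zt j) - (zt i + zs j))) = (K : ℝ) * (zs i - zt i) := by
      rw [Finset.sum_sub_distrib, Finset.sum_add_distrib, Finset.sum_add_distrib,
        Finset.sum_const, Finset.sum_const, hmean]
      simp [Finset.card_univ]
      ring
    rw [← hsum]
    refine this.congr fun T => ?_
    simp only [hN, Finset.mul_sum]
  have hDlim : Tendsto D atTop (nhds ((K : ℝ) * K)) := by
    have hone : ∀ z : Fin K → ℝ, Tendsto (fun T : ℝ => ∑ j, Real.exp (z j / T)) atTop
        (nhds (K : ℝ)) := by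
      intro z
      have : Tendsto (fun T : ℝ => ∑ j : Fin K, Real.exp (z j / T)) atTop
          (nhds (∑ _j : Fin K, (1:ℝ))) := by
        refine tendsto_finset_sum _ (fun j _ => ?_)
        have hx : Tendsto (fun T : ℝ => z j / T) atTop (nhds 0) := by
          simpa [div_eq_mul_inv] using tendsto_inv_atTop_zero.const_mul (z j)
        simpa [Function.comp_def] using (Real.continuous_exp.continuousAt.tendsto.comp hx)
      simpa using this
    exact (hone zs).mul (hone zt)
  have hKK : (K : ℝ) * K ≠ 0 := by positivity
  have := hNlim.div hDlim hKK
  have hval : (K : ℝ) * (zs i - zt i) / ((K : ℝ) * K) = (zs i - zt i) / K := by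
    field_simp
  rw [← hval]
  exact this.congr fun T => (heq T).symm
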